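/- arXiv:1108.2743 — 2 statements merged into one kernel-verified Lean document; each statement's English description precedes it below -/
import Mathlib

section
/- Let {X_n, n ≥ 0} be a Markov chain with kernel P adapted to filtration {ℱ_n}, and let Λ be defined from a symmetric function G as Λ(x₁, x₂; y₁, y₂) = G(y₁, y₂) − PG(x₂, y₁) − PG(x₁, y₂) + P²G(x₁, x₂), with all integrals finite. For 1 ≤ j < ℓ set Q_{ℓ,j} := Λ(X_{j−1}, X_{ℓ−1}; X_j, X_ℓ). Then E[Q_{ℓ,j} | ℱ_{ℓ−1}] = 0 almost surely, so that { Σ_{j=1}^{ℓ−1} Q_{ℓ,j}, ℱ_ℓ }_{ℓ≥2} is a martingale-difference array. -/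
open MeasureTheory ProbabilityTheory ENNReal Filter

noncomputable section

/-- `PG(a,b) = ∫ P(a,dz) G(z,b)`. -/
def PGfun {X : Type*} [MeasurableSpace X] (P : Kernel X X) (G : X → X → ℝ) (a b : X) : ℝ :=
  ∫ z, G z b ∂(P a)

/-- `P²G(a,b) = ∫ P(a,dz₁) ∫ P(b,dz₂) G(z₁,z₂)`. -/
def P2Gfun {X : Type*} [MeasurableSpace X] (P : Kernel X X) (G : X → X → ℝ) (a b : X) : ℝ :=
  ∫ z₁, (∫ z₂, G z₁ z₂ ∂(P b)) ∂(P a)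

/-- `Λ(x₁,x₂; y₁,y₂) = G(y₁,y₂) − PG(x₂,y₁) − PG(x₁,y₂) + P²G(x₁,x₂)`. -/
def Lam {X : Type*} [MeasurableSpace X] (P : Kernel X X) (G : X → X → ℝ)
    (x₁ x₂ y₁ y₂ : X) : ℝ :=
  G y₁ y₂ - PGfun P G x₂ y₁ - PGfun P G x₁ y₂ + P2Gfun P G x₁ x₂

lemma meas_PG {S : Type*} [MeasurableSpace S] (P : Kernel S S) [IsSFiniteKernel P]
    (G : S → S → ℝ) (hGm : Measurable (Function.uncurry G)) :
    Measurable (Function.uncurry (PGfun P G)) := by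
  have h : Measurable (Function.uncurry (fun (ab : S × S) (z : S) => G z ab.2)) :=
    hGm.comp (measurable_snd.prodMk measurable_fst.snd)
  have := (h.stronglyMeasurable.integral_kernel_prod_right
      (κ := P.comap Prod.fst measurable_fst)).measurable
  simpa [Function.uncurry_def, PGfun, Kernel.comap_apply] using this

lemma meas_P2G {S : Type*} [MeasurableSpace S] (P : Kernel S S) [IsSFiniteKernel P]
    (G : S → S → ℝ) (hGm : Measurable (Function.uncurry G)) :
    Measurable (Function.uncurry (P2Gfun P G)) := by
  have hG' : Measurable (Function.uncurry (fun u v => G v u)) :=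
    hGm.comp measurable_swap
  have hH : Measurable (Function.uncurry (fun z b => PGfun P (fun u v => G v u) b z)) :=
    (meas_PG P _ hG').comp measurable_swap
  have := meas_PG P _ hH
  simpa [Function.uncurry_def, PGfun, P2Gfun] using this

lemma intLam {S : Type*} [MeasurableSpace S] (P : Kernel S S) [IsMarkovKernel P]
    (G : S → S → ℝ) (hGsym : ∀ x y, G x y = G y x)
    (hint1 : ∀ a b : S, Integrable (fun z => G z b) (P a))
    (hint2 : ∀ a b : S, Integrable (fun q : S × S => G q.1 q.2) ((P a).prod (P b)))
    (x₁ x₂ y₁ : S) :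
    ∫ z, Lam P G x₁ x₂ y₁ z ∂(P x₂) = 0 := by
  have hI1 : Integrable (fun z => G y₁ z) (P x₂) := by
    have : (fun z => G y₁ z) = fun z => G z y₁ := funext fun z => hGsym _ _
    rw [this]; exact hint1 x₂ y₁
  have hI2 : Integrable (fun z => PGfun P G x₁ z) (P x₂) := by
    have := (hint2 x₁ x₂).integral_prod_right
    simpa [PGfun] using this
  have e1 : ∫ z, G y₁ z ∂(P x₂) = PGfun P G x₂ y₁ := by
    simp only [PGfun]; exact integral_congr_ae (Eventually.of_forall fun z => hGsym _ _)
  have e2 : ∫ z, PGfun P G x₁ z ∂(P x₂) = P2Gfun P G x₁ x₂ := by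
    have hswap := integral_integral_swap (μ := P x₁) (ν := P x₂) (f := fun a b => G a b)
      (hint2 x₁ x₂)
    simp only [PGfun, P2Gfun]
    exact hswap.symm
  have hconst : ∀ c : ℝ, ∫ _z, c ∂(P x₂) = c := by
    intro c; simp
  simp only [Lam]
  have hre : ∀ z, G y₁ z - PGfun P G x₂ y₁ - PGfun P G x₁ z + P2Gfun P G x₁ x₂
      = (G y₁ z - PGfun P G x₁ z) + (P2Gfun P G x₁ x₂ - PGfun P G x₂ y₁) := by
    intro z; ring
  rw [integral_congr_ae (Eventually.of_forall hre),
    integral_add (f := fun z => G y₁ z - PGfun P G x₁ z)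
      (g := fun _ => P2Gfun P G x₁ x₂ - PGfun P G x₂ y₁) (hI1.sub hI2) (integrable_const _),
    integral_sub (f := fun z => G y₁ z) (g := fun z => PGfun P G x₁ z) hI1 hI2, e1, e2, hconst]
  ring

/-- For a Markov chain `{X_n}` adapted to `𝓕` with kernel `P`, the increments
`Q_{ℓ,j} = Λ(X_{j−1}, X_{ℓ−1}; X_j, X_ℓ)` satisfy `E[Q_{ℓ,j} | 𝓕_{ℓ−1}] = 0` a.s. for
`1 ≤ j < ℓ`, so `{Σ_{j<ℓ} Q_{ℓ,j}, 𝓕_ℓ}` is a martingale-difference array. -/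
theorem stmt_8 {Ω S : Type*} [MeasurableSpace S] {mΩ : MeasurableSpace Ω}
    (Pr : Measure Ω) [IsProbabilityMeasure Pr] (𝓕 : Filtration ℕ mΩ)
    (P : Kernel S S) [IsMarkovKernel P]
    (X : ℕ → Ω → S) (hadapt : ∀ n, Measurable[𝓕 n] (X n))
    (G : S → S → ℝ) (hGm : Measurable (Function.uncurry G))
    (hGsym : ∀ x y, G x y = G y x)
    (hint1 : ∀ a b : S, Integrable (fun z => G z b) (P a))
    (hint2 : ∀ a b : S, Integrable (fun q : S × S => G q.1 q.2) ((P a).prod (P b)))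
    (hMarkov : ∀ ℓ : ℕ, 1 ≤ ℓ → ∀ F : Ω → S → ℝ,
      Measurable[(𝓕 (ℓ - 1)).prod inferInstance] (fun p : Ω × S => F p.1 p.2) →
      Integrable (fun ω => F ω (X ℓ ω)) Pr →
      Pr[(fun ω => F ω (X ℓ ω)) | 𝓕 (ℓ - 1)]
        =ᵐ[Pr] fun ω => ∫ z, F ω z ∂(P (X (ℓ - 1) ω)))
    (hQint : ∀ ℓ j : ℕ,
      Integrable (fun ω => Lam P G (X (j - 1) ω) (X (ℓ - 1) ω) (X j ω) (X ℓ ω)) Pr) :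
    ∀ ℓ j : ℕ, 1 ≤ j → j < ℓ →
      Pr[(fun ω => Lam P G (X (j - 1) ω) (X (ℓ - 1) ω) (X j ω) (X ℓ ω)) | 𝓕 (ℓ - 1)]
        =ᵐ[Pr] 0 := by
  intro ℓ j hj hjl
  have hℓ : 1 ≤ ℓ := hj.trans hjl.le
  set F : Ω → S → ℝ := fun ω z => Lam P G (X (j - 1) ω) (X (ℓ - 1) ω) (X j ω) z with hF
  have hX1 : Measurable[𝓕 (ℓ - 1)] (X (j - 1)) :=
    (hadapt (j - 1)).mono (𝓕.mono (by omega)) le_rfl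
  have hX2 : Measurable[𝓕 (ℓ - 1)] (X (ℓ - 1)) := hadapt (ℓ - 1)
  have hX3 : Measurable[𝓕 (ℓ - 1)] (X j) :=
    (hadapt j).mono (𝓕.mono (by omega)) le_rfl
  have hfst : @Measurable (Ω × S) Ω ((𝓕 (ℓ - 1)).prod inferInstance) (𝓕 (ℓ - 1)) Prod.fst :=
    measurable_fst
  have hsnd : @Measurable (Ω × S) S ((𝓕 (ℓ - 1)).prod inferInstance) inferInstance Prod.snd :=
    measurable_snd
  have hFm : Measurable[(𝓕 (ℓ - 1)).prod inferInstance] (fun p : Ω × S => F p.1 p.2) := by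
    simp only [hF, Lam]
    apply Measurable.add
    apply Measurable.sub
    apply Measurable.sub
    · exact hGm.comp ((hX3.comp hfst).prodMk hsnd)
    · exact (meas_PG P G hGm).comp ((hX2.comp hfst).prodMk (hX3.comp hfst))
    · exact (meas_PG P G hGm).comp ((hX1.comp hfst).prodMk hsnd)
    · exact (meas_P2G P G hGm).comp ((hX1.comp hfst).prodMk (hX2.comp hfst))
  have hInt : Integrable (fun ω => F ω (X ℓ ω)) Pr := hQint ℓ j
  refine (hMarkov ℓ hℓ F hFm hInt).trans ?_
  filter_upwards with ω
  exact intLam P G hGsym hint1 hint2 _ _ _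
end
end

section
/- Let {X_n} be a Markov chain with kernel P and invariant probability μ, h ∈ L_{V₁} with μ(h) = 0, Σ_{k≥0}‖P^k(x,·) − μ‖_{V₁} ≤ cV₂(x), and G = Σ_{j≥0}P^j h. If the chain starts from stationarity (X₀ ∼ μ) and μ(V₂²) < ∞, then the asymptotic variance σ²(h) := Var_μ(h(X₀)) + 2Σ_{ℓ≥1} Cov_μ(h(X₀), h(X_ℓ)) is finite and satisfies σ²(h) = ∫ μ(dx) ∫ P(x, dy) (G(y) − PG(x))². -/
open MeasureTheory ProbabilityTheory ENNReal Filter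
noncomputable section

/-- The `W`-norm of a signed measure: `∫ W d|ν|`. -/
def Wnorm {X : Type*} [MeasurableSpace X] (W : X → ℝ) (ν : SignedMeasure X) : ℝ≥0∞ :=
  ∫⁻ x, ENNReal.ofReal (W x) ∂ ν.totalVariation

/-- Integral of a function against a signed measure. -/
def sInt {X : Type*} [MeasurableSpace X] (ν : SignedMeasure X) (f : X → ℝ) : ℝ :=
  (∫ x, f x ∂ ν.toJordanDecomposition.posPart) - (∫ x, f x ∂ ν.toJordanDecomposition.negPart)

/-- The product of two finite signed measures, via Jordan decompositions. -/
def prodSM {X Y : Type*} [MeasurableSpace X] [MeasurableSpace Y]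
    (a : SignedMeasure X) (b : SignedMeasure Y) : SignedMeasure (X × Y) :=
  (a.toJordanDecomposition.posPart.prod b.toJordanDecomposition.posPart
    + a.toJordanDecomposition.negPart.prod b.toJordanDecomposition.negPart).toSignedMeasure
  - (a.toJordanDecomposition.posPart.prod b.toJordanDecomposition.negPart
    + a.toJordanDecomposition.negPart.prod b.toJordanDecomposition.posPart).toSignedMeasure

/-- Iterates of a Markov kernel: `kiter P 0 = id`, `kiter P (n+1) (x, ·) = ∫ P(x,dz) kiter P n (z, ·)`. -/
def kiter {X : Type*} [MeasurableSpace X] (P : Kernel X X) : ℕ → Kernel X X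
  | 0 => Kernel.id
  | n + 1 => (kiter P n) ∘ₖ P

instance kiter.instIsMarkovKernel {X : Type*} [MeasurableSpace X] (P : Kernel X X)
    [IsMarkovKernel P] (n : ℕ) : IsMarkovKernel (kiter P n) := by
  induction n with
  | zero => rw [kiter]; infer_instance
  | succ n ih => rw [kiter]; infer_instance

/-- The signed measure `Pⁿ(x,·) − μ`. -/
def dSM {X : Type*} [MeasurableSpace X] (P : Kernel X X) [IsMarkovKernel P]
    (μ : Measure X) [IsProbabilityMeasure μ] (n : ℕ) (x : X) : SignedMeasure X :=
  ((kiter P n) x).toSignedMeasure - μ.toSignedMeasure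


/-- The Poisson-equation solution `G(x) = Σ_{j≥0} Pʲh(x)`. -/
def Gfun {X : Type*} [MeasurableSpace X] (P : Kernel X X) [IsMarkovKernel P]
    (h : X → ℝ) (x : X) : ℝ :=
  ∑' j : ℕ, ∫ z, h z ∂((kiter P j) x)

namespace Stmt15Aux

variable {X : Type*} [MeasurableSpace X]

lemma ennnorm_eq_ofReal_add_ofReal_neg (a : ℝ) :
    ‖a‖ₑ = ENNReal.ofReal a + ENNReal.ofReal (-a) := by
  rcases le_total 0 a with ha | ha
  · rw [Real.enorm_eq_ofReal_abs, abs_of_nonneg ha,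
      ENNReal.ofReal_of_nonpos (neg_nonpos.mpr ha), add_zero]
  · rw [Real.enorm_eq_ofReal_abs, abs_of_nonpos ha, ENNReal.ofReal_of_nonpos ha, zero_add]

lemma ofReal_max_zero (a : ℝ) : ENNReal.ofReal (max a 0) = ENNReal.ofReal a := by
  rcases le_total 0 a with ha | ha
  · rw [max_eq_left ha]
  · rw [max_eq_right ha, ENNReal.ofReal_of_nonpos ha, ENNReal.ofReal_zero]

lemma measure_decomp (α β : Measure X) [IsFiniteMeasure α] [IsFiniteMeasure β] :
    α + (α.toSignedMeasure - β.toSignedMeasure).toJordanDecomposition.negPart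
      = β + (α.toSignedMeasure - β.toSignedMeasure).toJordanDecomposition.posPart := by
  have h1 : (α.toSignedMeasure - β.toSignedMeasure).toJordanDecomposition.posPart.toSignedMeasure
      - (α.toSignedMeasure - β.toSignedMeasure).toJordanDecomposition.negPart.toSignedMeasure
      = α.toSignedMeasure - β.toSignedMeasure :=
    (α.toSignedMeasure - β.toSignedMeasure).toSignedMeasure_toJordanDecomposition
  rw [← Measure.toSignedMeasure_eq_toSignedMeasure_iff, Measure.toSignedMeasure_add,
    Measure.toSignedMeasure_add]
  have h2 := sub_eq_sub_iff_add_eq_add.mp h1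
  exact h2.symm.trans (add_comm _ _)

lemma integral_bind_kernel (ν : Measure X) [IsFiniteMeasure ν] (κ : Kernel X X) [IsMarkovKernel κ]
    {f : X → ℝ} (hf : Measurable f)
    (hfi : ∫⁻ y, ‖f y‖ₑ ∂(ν.bind fun x => κ x) ≠ ⊤) :
    ∫ y, f y ∂(ν.bind fun x => κ x) = ∫ x, ∫ y, f y ∂(κ x) ∂ν := by
  have hκ : Measurable fun x => (κ x : Measure X) := κ.measurable
  have hfp : Measurable fun y => ENNReal.ofReal (f y) := hf.ennreal_ofReal
  have hfn : Measurable fun y => ENNReal.ofReal (-f y) := hf.neg.ennreal_ofReal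
  have mA : Measurable fun x => ∫⁻ y, ENNReal.ofReal (f y) ∂κ x := hfp.lintegral_kernel
  have mB : Measurable fun x => ∫⁻ y, ENNReal.ofReal (-f y) ∂κ x := hfn.lintegral_kernel
  have hsplit : ∫⁻ y, ‖f y‖ₑ ∂(ν.bind fun x => κ x)
      = (∫⁻ x, ∫⁻ y, ENNReal.ofReal (f y) ∂κ x ∂ν)
        + ∫⁻ x, ∫⁻ y, ENNReal.ofReal (-f y) ∂κ x ∂ν := by
    simp_rw [ennnorm_eq_ofReal_add_ofReal_neg]
    rw [lintegral_add_left hfp, Measure.lintegral_bind hκ.aemeasurable hfp.aemeasurable, Measure.lintegral_bind hκ.aemeasurable hfn.aemeasurable]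
  obtain ⟨hAfin, hBfin⟩ := ENNReal.add_ne_top.mp (by rwa [hsplit] at hfi)
  have hint : Integrable f (ν.bind fun x => κ x) :=
    ⟨hf.aestronglyMeasurable, lt_top_iff_ne_top.mpr hfi⟩
  rw [integral_eq_lintegral_pos_part_sub_lintegral_neg_part hint,
    Measure.lintegral_bind hκ.aemeasurable hfp.aemeasurable, Measure.lintegral_bind hκ.aemeasurable hfn.aemeasurable,
    ← integral_toReal mA.aemeasurable (ae_lt_top mA hAfin),
    ← integral_toReal mB.aemeasurable (ae_lt_top mB hBfin),
    ← integral_sub (integrable_toReal_of_lintegral_ne_top mA.aemeasurable hAfin)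
      (integrable_toReal_of_lintegral_ne_top mB.aemeasurable hBfin)]
  refine integral_congr_ae ?_
  filter_upwards [ae_lt_top mA hAfin, ae_lt_top mB hBfin] with x hAx hBx
  have hix : Integrable f (κ x) := by
    refine ⟨hf.aestronglyMeasurable, ?_⟩
    have heq : ∫⁻ y, ‖f y‖ₑ ∂κ x
        = (∫⁻ y, ENNReal.ofReal (f y) ∂κ x) + ∫⁻ y, ENNReal.ofReal (-f y) ∂κ x := by
      simp_rw [ennnorm_eq_ofReal_add_ofReal_neg]
      rw [lintegral_add_left hfp]
    simpa [HasFiniteIntegral, heq] using ENNReal.add_lt_top.mpr ⟨hAx, hBx⟩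
  rw [integral_eq_lintegral_pos_part_sub_lintegral_neg_part hix]

lemma integrable_of_le (f W : X → ℝ) (CC : ℝ) (hCC : 0 ≤ CC) (hf : Measurable f)
    (hW : Measurable W) (hb : ∀ y, |f y| ≤ CC * W y) (ξ : Measure X)
    (hfin : ∫⁻ y, ENNReal.ofReal (W y) ∂ξ ≠ ⊤) : Integrable f ξ := by
  refine ⟨hf.aestronglyMeasurable, ?_⟩
  have hle : ∫⁻ y, ‖f y‖ₑ ∂ξ ≤ ENNReal.ofReal CC * ∫⁻ y, ENNReal.ofReal (W y) ∂ξ := by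
    rw [← lintegral_const_mul _ (hW.ennreal_ofReal)]
    refine lintegral_mono fun y => ?_
    rw [Real.enorm_eq_ofReal_abs, ← ENNReal.ofReal_mul hCC]
    exact ENNReal.ofReal_le_ofReal (hb y)
  exact lt_of_le_of_lt hle (ENNReal.mul_lt_top ENNReal.ofReal_lt_top (lt_top_iff_ne_top.mpr hfin))

end Stmt15Aux

open Stmt15Aux
set_option maxHeartbeats 2000000

/-- Under stationarity and `μ(V₂²) < ∞`, the asymptotic variance
`σ²(h) = Var_μ(h) + 2 Σ_{ℓ≥1} Cov_μ(h(X₀), h(X_ℓ))` is finite (the covariance series,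
`Cov_μ(h(X₀), h(X_ℓ)) = ∫ h · Pˡh dμ`, is summable) and equals
`∫ μ(dx) ∫ P(x,dy) (G(y) − PG(x))²`. -/
theorem stmt_15 {X : Type*} [MeasurableSpace X] (P : Kernel X X) [IsMarkovKernel P]
    (μ : Measure X) [IsProbabilityMeasure μ] (hinv : μ.bind (fun x => P x) = μ)
    (V₁ V₂ : X → ℝ) (mV₁ : Measurable V₁) (mV₂ : Measurable V₂)
    (h11 : ∀ x, 1 ≤ V₁ x) (h12 : ∀ x, V₁ x ≤ V₂ x) (c : ℝ)
    (hSRD : ∀ x, ∑' k : ℕ, Wnorm V₁ (dSM P μ k x) ≤ ENNReal.ofReal (c * V₂ x))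
    (h : X → ℝ) (hm : Measurable h) (M : ℝ) (hM : ∀ x, |h x| ≤ M * V₁ x)
    (hmean : ∫ x, h x ∂μ = 0)
    (hV2sq : Integrable (fun x => V₂ x ^ 2) μ) :
    Summable (fun ℓ : ℕ => ∫ x, h x * ∫ y, h y ∂((kiter P (ℓ + 1)) x) ∂μ)
    ∧ (∫ x, h x ^ 2 ∂μ)
        + 2 * ∑' ℓ : ℕ, ∫ x, h x * ∫ y, h y ∂((kiter P (ℓ + 1)) x) ∂μ
      = ∫ x, ∫ y, (Gfun P h y - ∫ z, Gfun P h z ∂(P x)) ^ 2 ∂(P x) ∂μ := by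
  classical
  -- ## basic positivity facts
  have hV2pos : ∀ x, (0:ℝ) < V₂ x := fun x => lt_of_lt_of_le one_pos ((h11 x).trans (h12 x))
  have hV21 : ∀ x, (1:ℝ) ≤ V₂ x := fun x => (h11 x).trans (h12 x)
  have hX : Nonempty X := by
    by_contra hne
    rw [not_nonempty_iff] at hne
    have h1 : μ Set.univ = 1 := measure_univ
    rw [Set.univ_eq_empty_iff.mpr hne, measure_empty] at h1
    exact zero_ne_one h1
  obtain ⟨x₀⟩ := hX
  have hM0 : 0 ≤ M := by nlinarith [hM x₀, abs_nonneg (h x₀), h11 x₀]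
  set c' : ℝ := max c 0 with hc'def
  have hc'0 : 0 ≤ c' := le_max_right _ _
  set K : ℝ := M * c' with hKdef
  have hK0 : 0 ≤ K := mul_nonneg hM0 hc'0
  -- ## finiteness of the V₁-norms
  have hWfin : ∀ (n : ℕ) (x : X), Wnorm V₁ (dSM P μ n x) ≠ ⊤ := fun n x =>
    ne_top_of_le_ne_top (ne_top_of_le_ne_top ENNReal.ofReal_ne_top (hSRD x)) (ENNReal.le_tsum n)
  have hdec : ∀ (n : ℕ) (x : X),
      (kiter P n) x + (dSM P μ n x).toJordanDecomposition.negPart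
        = μ + (dSM P μ n x).toJordanDecomposition.posPart := fun n x =>
    Stmt15Aux.measure_decomp ((kiter P n) x) μ
  have hWtv : ∀ (n : ℕ) (x : X), Wnorm V₁ (dSM P μ n x)
      = (∫⁻ y, ENNReal.ofReal (V₁ y) ∂(dSM P μ n x).toJordanDecomposition.posPart)
        + ∫⁻ y, ENNReal.ofReal (V₁ y) ∂(dSM P μ n x).toJordanDecomposition.negPart :=
    fun n x => lintegral_add_measure _ _ _
  have hWpos : ∀ (n : ℕ) (x : X),
      (∫⁻ y, ENNReal.ofReal (V₁ y) ∂(dSM P μ n x).toJordanDecomposition.posPart)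
        ≤ Wnorm V₁ (dSM P μ n x) := by
    intro n x; rw [hWtv n x]; exact le_self_add
  have hWneg : ∀ (n : ℕ) (x : X),
      (∫⁻ y, ENNReal.ofReal (V₁ y) ∂(dSM P μ n x).toJordanDecomposition.negPart)
        ≤ Wnorm V₁ (dSM P μ n x) := by
    intro n x; rw [hWtv n x]; exact le_add_self
  have hmuV22 : ∫⁻ x, ENNReal.ofReal (V₂ x ^ 2) ∂μ ≠ ⊤ := hV2sq.lintegral_lt_top.ne
  have hmuV2 : ∫⁻ x, ENNReal.ofReal (V₂ x) ∂μ ≠ ⊤ :=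
    ne_top_of_le_ne_top hmuV22 (lintegral_mono fun x =>
      ENNReal.ofReal_le_ofReal (le_self_pow₀ (hV21 x) two_ne_zero))
  have hmuV1 : ∫⁻ x, ENNReal.ofReal (V₁ x) ∂μ ≠ ⊤ :=
    ne_top_of_le_ne_top hmuV2 (lintegral_mono fun x => ENNReal.ofReal_le_ofReal (h12 x))
  have hlV1 : ∀ (n : ℕ) (x : X), ∫⁻ y, ENNReal.ofReal (V₁ y) ∂((kiter P n) x) ≠ ⊤ := by
    intro n x
    have h1 : ∫⁻ y, ENNReal.ofReal (V₁ y) ∂((kiter P n) x)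
        ≤ ∫⁻ y, ENNReal.ofReal (V₁ y)
            ∂((kiter P n) x + (dSM P μ n x).toJordanDecomposition.negPart) :=
      lintegral_mono' (Measure.le_add_right le_rfl) le_rfl
    rw [hdec n x, lintegral_add_measure] at h1
    exact ne_top_of_le_ne_top (ENNReal.add_ne_top.mpr
      ⟨hmuV1, ne_top_of_le_ne_top (hWfin n x) (hWpos n x)⟩) h1
  -- ## integrability of h with respect to the various measures
  have hInthμ : Integrable h μ := integrable_of_le h V₁ M hM0 hm mV₁ hM μ hmuV1
  have hInth_iter : ∀ (n : ℕ) (x : X), Integrable h ((kiter P n) x) := fun n x =>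
    integrable_of_le h V₁ M hM0 hm mV₁ hM _ (hlV1 n x)
  have hInth_pos : ∀ (n : ℕ) (x : X),
      Integrable h ((dSM P μ n x).toJordanDecomposition.posPart) := fun n x =>
    integrable_of_le h V₁ M hM0 hm mV₁ hM _ (ne_top_of_le_ne_top (hWfin n x) (hWpos n x))
  have hInth_neg : ∀ (n : ℕ) (x : X),
      Integrable h ((dSM P μ n x).toJordanDecomposition.negPart) := fun n x =>
    integrable_of_le h V₁ M hM0 hm mV₁ hM _ (ne_top_of_le_ne_top (hWfin n x) (hWneg n x))
  -- ## the iterates g n x = ∫ h dPⁿ(x,·)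
  set g : ℕ → X → ℝ := fun n x => ∫ y, h y ∂((kiter P n) x) with hgdef
  have hgsub : ∀ (n : ℕ) (x : X), g n x
      = (∫ y, h y ∂(dSM P μ n x).toJordanDecomposition.posPart)
        - ∫ y, h y ∂(dSM P μ n x).toJordanDecomposition.negPart := by
    intro n x
    have h1 := integral_add_measure (hInth_iter n x) (hInth_neg n x)
    rw [hdec n x, integral_add_measure hInthμ (hInth_pos n x), hmean, zero_add] at h1
    simp only [hgdef]
    linarith [h1]
  have habs_int : ∀ (ξ : Measure X), (∫⁻ y, ENNReal.ofReal (V₁ y) ∂ξ ≠ ⊤) →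
      |∫ y, h y ∂ξ| ≤ (ENNReal.ofReal M * ∫⁻ y, ENNReal.ofReal (V₁ y) ∂ξ).toReal := by
    intro ξ hξ
    have h1 : |∫ y, h y ∂ξ| ≤ (∫⁻ y, ENNReal.ofReal ‖h y‖ ∂ξ).toReal := by
      simpa [Real.norm_eq_abs] using norm_integral_le_lintegral_norm (μ := ξ) h
    refine h1.trans (ENNReal.toReal_mono (ENNReal.mul_ne_top ENNReal.ofReal_ne_top hξ) ?_)
    rw [← lintegral_const_mul _ mV₁.ennreal_ofReal]
    refine lintegral_mono fun y => ?_
    rw [← ENNReal.ofReal_mul hM0]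
    exact ENNReal.ofReal_le_ofReal (by rw [Real.norm_eq_abs]; exact hM y)
  have hgb : ∀ (n : ℕ) (x : X), |g n x| ≤ M * (Wnorm V₁ (dSM P μ n x)).toReal := by
    intro n x
    rw [hgsub n x]
    have hLp : (∫⁻ y, ENNReal.ofReal (V₁ y) ∂(dSM P μ n x).toJordanDecomposition.posPart) ≠ ⊤ :=
      ne_top_of_le_ne_top (hWfin n x) (hWpos n x)
    have hLn : (∫⁻ y, ENNReal.ofReal (V₁ y) ∂(dSM P μ n x).toJordanDecomposition.negPart) ≠ ⊤ :=
      ne_top_of_le_ne_top (hWfin n x) (hWneg n x)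
    calc |(∫ y, h y ∂(dSM P μ n x).toJordanDecomposition.posPart)
        - ∫ y, h y ∂(dSM P μ n x).toJordanDecomposition.negPart|
        ≤ |∫ y, h y ∂(dSM P μ n x).toJordanDecomposition.posPart|
          + |∫ y, h y ∂(dSM P μ n x).toJordanDecomposition.negPart| := abs_sub _ _
      _ ≤ (ENNReal.ofReal M
            * ∫⁻ y, ENNReal.ofReal (V₁ y) ∂(dSM P μ n x).toJordanDecomposition.posPart).toReal
          + (ENNReal.ofReal M
            * ∫⁻ y, ENNReal.ofReal (V₁ y) ∂(dSM P μ n x).toJordanDecomposition.negPart).toReal :=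
        add_le_add (habs_int _ hLp) (habs_int _ hLn)
      _ = (ENNReal.ofReal M
            * ((∫⁻ y, ENNReal.ofReal (V₁ y) ∂(dSM P μ n x).toJordanDecomposition.posPart)
            + ∫⁻ y, ENNReal.ofReal (V₁ y) ∂(dSM P μ n x).toJordanDecomposition.negPart)).toReal := by
        rw [mul_add, ENNReal.toReal_add (ENNReal.mul_ne_top ENNReal.ofReal_ne_top hLp)
          (ENNReal.mul_ne_top ENNReal.ofReal_ne_top hLn)]
      _ = M * (Wnorm V₁ (dSM P μ n x)).toReal := by
        rw [← hWtv n x, ENNReal.toReal_mul, ENNReal.toReal_ofReal hM0]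
  -- ## summability of the norms
  have hWsummable : ∀ x, Summable fun n => (Wnorm V₁ (dSM P μ n x)).toReal := fun x =>
    ENNReal.summable_toReal (ne_top_of_le_ne_top ENNReal.ofReal_ne_top (hSRD x))
  have hWsum_le : ∀ x, (∑' n, (Wnorm V₁ (dSM P μ n x)).toReal) ≤ c' * V₂ x := by
    intro x
    rw [← ENNReal.tsum_toReal_eq (fun n => hWfin n x)]
    refine (ENNReal.toReal_mono ENNReal.ofReal_ne_top (hSRD x)).trans ?_
    rw [ENNReal.toReal_ofReal']
    exact max_le (mul_le_mul_of_nonneg_right (le_max_left c 0) (hV2pos x).le)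
      (mul_nonneg hc'0 (hV2pos x).le)
  have hgabs_summable : ∀ x, Summable fun n => |g n x| := fun x =>
    Summable.of_nonneg_of_le (fun n => abs_nonneg _) (fun n => hgb n x) ((hWsummable x).mul_left M)
  have hgsummable : ∀ x, Summable fun n => g n x := fun x => (hgabs_summable x).of_abs
  have hgabs_le : ∀ x, (∑' n, |g n x|) ≤ K * V₂ x := by
    intro x
    calc (∑' n, |g n x|) ≤ ∑' n, M * (Wnorm V₁ (dSM P μ n x)).toReal :=
        Summable.tsum_le_tsum (fun n => hgb n x) (hgabs_summable x) ((hWsummable x).mul_left M)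
      _ = M * ∑' n, (Wnorm V₁ (dSM P μ n x)).toReal := tsum_mul_left
      _ ≤ M * (c' * V₂ x) := mul_le_mul_of_nonneg_left (hWsum_le x) hM0
      _ = K * V₂ x := by rw [hKdef]; ring
  -- ## facts about G
  have hGeq : ∀ x, Gfun P h x = ∑' n, g n x := fun x => rfl
  have hGb : ∀ x, |Gfun P h x| ≤ K * V₂ x := by
    intro x
    rw [hGeq]
    have h1 := norm_tsum_le_tsum_norm (f := fun n => g n x)
      (by simpa [Real.norm_eq_abs] using hgabs_summable x)
    calc |∑' n, g n x| ≤ ∑' n, |g n x| := by simpa [Real.norm_eq_abs] using h1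
      _ ≤ K * V₂ x := hgabs_le x
  -- ## measurability
  have mg : ∀ n, Measurable (g n) := by
    intro n
    have hrepr : g n = fun x => (∫⁻ y, ENNReal.ofReal (h y) ∂(kiter P n) x).toReal
        - (∫⁻ y, ENNReal.ofReal (-h y) ∂(kiter P n) x).toReal := by
      funext x
      simp only [hgdef]
      exact integral_eq_lintegral_pos_part_sub_lintegral_neg_part (hInth_iter n x)
    rw [hrepr]
    exact (hm.ennreal_ofReal.lintegral_kernel.ennreal_toReal).sub
      (hm.neg.ennreal_ofReal.lintegral_kernel.ennreal_toReal)
  have mG : Measurable (Gfun P h) := by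
    have hrepr : Gfun P h = fun x => (∑' n, ENNReal.ofReal (g n x)).toReal
        - (∑' n, ENNReal.ofReal (-(g n x))).toReal := by
      funext x
      rw [hGeq]
      have hp : Summable fun n => max (g n x) 0 :=
        Summable.of_nonneg_of_le (fun n => le_max_right _ _)
          (fun n => max_le (le_abs_self _) (abs_nonneg _)) (hgabs_summable x)
      have hq : Summable fun n => max (-(g n x)) 0 :=
        Summable.of_nonneg_of_le (fun n => le_max_right _ _)
          (fun n => max_le (by rw [← abs_neg]; exact le_abs_self _) (abs_nonneg _))
          (hgabs_summable x)
      have e1 : (∑' n, ENNReal.ofReal (g n x)) = ENNReal.ofReal (∑' n, max (g n x) 0) := by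
        rw [ENNReal.ofReal_tsum_of_nonneg (fun n => le_max_right _ _) hp]
        exact tsum_congr fun n => (ofReal_max_zero _).symm
      have e2 : (∑' n, ENNReal.ofReal (-(g n x)))
          = ENNReal.ofReal (∑' n, max (-(g n x)) 0) := by
        rw [ENNReal.ofReal_tsum_of_nonneg (fun n => le_max_right _ _) hq]
        exact tsum_congr fun n => (ofReal_max_zero _).symm
      rw [e1, e2, ENNReal.toReal_ofReal (tsum_nonneg fun n => le_max_right _ _),
        ENNReal.toReal_ofReal (tsum_nonneg fun n => le_max_right _ _), ← Summable.tsum_sub hp hq]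
      exact tsum_congr fun n => (max_zero_sub_max_neg_zero_eq_self (g n x)).symm
    rw [hrepr]
    refine Measurable.sub ?_ ?_
    · exact (Measurable.ennreal_tsum fun n => (mg n).ennreal_ofReal).ennreal_toReal
    · exact (Measurable.ennreal_tsum fun n => (mg n).neg.ennreal_ofReal).ennreal_toReal
  -- ## the semigroup relations
  have hg0 : ∀ x, g 0 x = h x := by
    intro x
    simp only [hgdef]
    rw [show kiter P 0 = Kernel.id from rfl, Kernel.id_apply]
    exact integral_dirac' h x hm.stronglyMeasurable
  have hsucc : ∀ (n : ℕ) (x : X), g (n + 1) x = ∫ y, g n y ∂(P x) := by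
    intro n x
    have hbindeq : (kiter P (n+1)) x = (P x).bind fun z => (kiter P n) z := by
      rw [show kiter P (n+1) = kiter P n ∘ₖ P from rfl, Kernel.comp_apply]
    have hfi : ∫⁻ y, ‖h y‖ₑ ∂((P x).bind fun z => (kiter P n) z) ≠ ⊤ := by
      rw [← hbindeq]
      exact (hInth_iter (n+1) x).2.ne
    have h1 := integral_bind_kernel (P x) (kiter P n) hm hfi
    simp only [hgdef]
    rw [hbindeq]
    exact h1
  -- ## a.e. finiteness from invariance
  have hbindeqμ : ∀ (f : X → ℝ≥0∞), Measurable f →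
      ∫⁻ x, (∫⁻ y, f y ∂P x) ∂μ = ∫⁻ x, f x ∂μ := by
    intro f hf
    have h1 := Measure.lintegral_bind (m := μ) (μ := fun x => P x) P.measurable.aemeasurable hf.aemeasurable
    rw [hinv] at h1
    exact h1.symm
  have hbindV2 : ∫⁻ x, (∫⁻ y, ENNReal.ofReal (V₂ y) ∂P x) ∂μ ≠ ⊤ := by
    rw [hbindeqμ _ mV₂.ennreal_ofReal]; exact hmuV2
  have haeV2 : ∀ᵐ x ∂μ, (∫⁻ y, ENNReal.ofReal (V₂ y) ∂P x) < ⊤ :=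
    ae_lt_top mV₂.ennreal_ofReal.lintegral_kernel hbindV2
  have mG2 : Measurable fun y => Gfun P h y ^ 2 := mG.pow_const 2
  have hG2b : ∀ y, |Gfun P h y ^ 2| ≤ K ^ 2 * V₂ y ^ 2 := by
    intro y
    rw [abs_of_nonneg (sq_nonneg _)]
    calc Gfun P h y ^ 2 = |Gfun P h y| ^ 2 := (sq_abs _).symm
      _ ≤ (K * V₂ y) ^ 2 := pow_le_pow_left₀ (abs_nonneg _) (hGb y) 2
      _ = K ^ 2 * V₂ y ^ 2 := by ring
  have hmuG2 : ∫⁻ x, ENNReal.ofReal (Gfun P h x ^ 2) ∂μ ≠ ⊤ := by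
    have hle : ∫⁻ x, ENNReal.ofReal (Gfun P h x ^ 2) ∂μ
        ≤ ENNReal.ofReal (K ^ 2) * ∫⁻ x, ENNReal.ofReal (V₂ x ^ 2) ∂μ := by
      rw [← lintegral_const_mul _ (mV₂.pow_const 2).ennreal_ofReal]
      refine lintegral_mono fun x => ?_
      rw [← ENNReal.ofReal_mul (sq_nonneg K)]
      exact ENNReal.ofReal_le_ofReal ((le_abs_self _).trans (hG2b x))
    exact ne_top_of_le_ne_top (ENNReal.mul_ne_top ENNReal.ofReal_ne_top hmuV22) hle
  have hbindG2 : ∫⁻ x, (∫⁻ y, ENNReal.ofReal (Gfun P h y ^ 2) ∂P x) ∂μ ≠ ⊤ := by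
    rw [hbindeqμ _ mG2.ennreal_ofReal]; exact hmuG2
  have haeG2 : ∀ᵐ x ∂μ, (∫⁻ y, ENNReal.ofReal (Gfun P h y ^ 2) ∂P x) < ⊤ :=
    ae_lt_top mG2.ennreal_ofReal.lintegral_kernel hbindG2
  -- ## the a.e. Poisson identity  PG = G - h
  have hb_ennnorm : ∀ y, (∑' n, ‖g n y‖ₑ)
      ≤ ENNReal.ofReal K * ENNReal.ofReal (V₂ y) := by
    intro y
    have e : (∑' n, ‖g n y‖ₑ) = ENNReal.ofReal (∑' n, |g n y|) := by
      rw [ENNReal.ofReal_tsum_of_nonneg (fun n => abs_nonneg _) (hgabs_summable y)]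
      exact tsum_congr fun n => Real.enorm_eq_ofReal_abs _
    rw [e, ← ENNReal.ofReal_mul hK0]
    exact ENNReal.ofReal_le_ofReal (hgabs_le y)
  have hPG : ∀ᵐ x ∂μ, (∫ z, Gfun P h z ∂(P x)) = Gfun P h x - h x := by
    filter_upwards [haeV2] with x hx
    have hlt : (∑' n, ∫⁻ y, ‖g n y‖ₑ ∂P x) ≠ ⊤ := by
      rw [← lintegral_tsum (fun n => (mg n).enorm.aemeasurable)]
      have h2 : ∫⁻ y, (∑' n, ‖g n y‖ₑ) ∂P x
          ≤ ENNReal.ofReal K * ∫⁻ y, ENNReal.ofReal (V₂ y) ∂P x := by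
        rw [← lintegral_const_mul _ mV₂.ennreal_ofReal]
        exact lintegral_mono hb_ennnorm
      exact ne_top_of_le_ne_top (ENNReal.mul_ne_top ENNReal.ofReal_ne_top hx.ne) h2
    have h1 : ∫ z, Gfun P h z ∂(P x) = ∑' n, ∫ z, g n z ∂P x := by
      calc ∫ z, Gfun P h z ∂(P x) = ∫ z, ∑' n, g n z ∂(P x) := by simp only [hGeq]
        _ = ∑' n, ∫ z, g n z ∂P x :=
          integral_tsum (fun n => (mg n).aestronglyMeasurable) hlt
    rw [h1]
    have h3 := Summable.tsum_eq_zero_add (hgsummable x)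
    have h4 : (∑' n, ∫ z, g n z ∂P x) = ∑' n, g (n+1) x :=
      tsum_congr fun n => (hsucc n x).symm
    rw [h4, hGeq x, h3, hg0 x]
    ring
  -- ## the RHS inner integral
  set AA : X → ℝ := fun x => (∫⁻ y, ENNReal.ofReal (Gfun P h y ^ 2) ∂P x).toReal with hAAdef
  have hGA : ∀ x, ∫ y, Gfun P h y ^ 2 ∂(P x) = AA x := fun x =>
    integral_eq_lintegral_of_nonneg_ae (ae_of_all _ fun y => sq_nonneg _)
      mG2.aestronglyMeasurable
  have hIntAA : Integrable AA μ :=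
    integrable_toReal_of_lintegral_ne_top
      mG2.ennreal_ofReal.lintegral_kernel.aemeasurable hbindG2
  have hAAval : ∫ x, AA x ∂μ = ∫ x, Gfun P h x ^ 2 ∂μ := by
    simp only [hAAdef]
    rw [integral_toReal mG2.ennreal_ofReal.lintegral_kernel.aemeasurable haeG2,
      hbindeqμ _ mG2.ennreal_ofReal]
    exact (integral_eq_lintegral_of_nonneg_ae (ae_of_all _ fun y => sq_nonneg _)
      mG2.aestronglyMeasurable).symm
  -- ## integrability over μ
  have hIntG2μ : Integrable (fun x => Gfun P h x ^ 2) μ :=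
    integrable_of_le _ (fun x => V₂ x ^ 2) (K ^ 2) (sq_nonneg K) mG2 (mV₂.pow_const 2)
      hG2b μ hmuV22
  have hInthGμ : Integrable (fun x => h x * Gfun P h x) μ := by
    refine integrable_of_le _ (fun x => V₂ x ^ 2) (M * K) (mul_nonneg hM0 hK0)
      (hm.mul mG) (mV₂.pow_const 2) (fun x => ?_) μ hmuV22
    rw [Pi.mul_apply, abs_mul]
    calc |h x| * |Gfun P h x| ≤ (M * V₁ x) * (K * V₂ x) :=
        mul_le_mul (hM x) (hGb x) (abs_nonneg _) (le_trans (abs_nonneg _) (hM x))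
      _ ≤ (M * V₂ x) * (K * V₂ x) := by
        refine mul_le_mul_of_nonneg_right (mul_le_mul_of_nonneg_left (h12 x) hM0) ?_
        exact mul_nonneg hK0 (hV2pos x).le
      _ = M * K * V₂ x ^ 2 := by ring
  have hInth2μ : Integrable (fun x => h x ^ 2) μ := by
    refine integrable_of_le _ (fun x => V₂ x ^ 2) (M ^ 2) (sq_nonneg M)
      (hm.pow_const 2) (mV₂.pow_const 2) (fun x => ?_) μ hmuV22
    rw [abs_of_nonneg (sq_nonneg _)]
    calc h x ^ 2 = |h x| ^ 2 := (sq_abs _).symm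
      _ ≤ (M * V₁ x) ^ 2 := pow_le_pow_left₀ (abs_nonneg _) (hM x) 2
      _ ≤ (M * V₂ x) ^ 2 := by
        refine pow_le_pow_left₀ (mul_nonneg hM0 (lt_of_lt_of_le one_pos (h11 x)).le) ?_ 2
        exact mul_le_mul_of_nonneg_left (h12 x) hM0
      _ = M ^ 2 * V₂ x ^ 2 := by ring
  have hIntGh2μ : Integrable (fun x => (Gfun P h x - h x) ^ 2) μ := by
    refine integrable_of_le _ (fun x => V₂ x ^ 2) ((K + M) ^ 2)
      (sq_nonneg _) ((mG.sub hm).pow_const 2) (mV₂.pow_const 2) (fun x => ?_) μ hmuV22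
    rw [abs_of_nonneg (sq_nonneg _)]
    calc (Gfun P h x - h x) ^ 2 = |Gfun P h x - h x| ^ 2 := (sq_abs _).symm
      _ ≤ ((K + M) * V₂ x) ^ 2 := by
        refine pow_le_pow_left₀ (abs_nonneg _) ?_ 2
        calc |Gfun P h x - h x| ≤ |Gfun P h x| + |h x| := abs_sub _ _
          _ ≤ K * V₂ x + M * V₂ x := add_le_add (hGb x)
              ((hM x).trans (mul_le_mul_of_nonneg_left (h12 x) hM0))
          _ = (K + M) * V₂ x := by ring
      _ = (K + M) ^ 2 * V₂ x ^ 2 := by ring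
  -- ## evaluate the RHS
  have hRHS : (∫ x, ∫ y, (Gfun P h y - ∫ z, Gfun P h z ∂(P x)) ^ 2 ∂(P x) ∂μ)
      = ∫ x, (AA x - (Gfun P h x - h x) ^ 2) ∂μ := by
    refine integral_congr_ae ?_
    filter_upwards [haeV2, haeG2, hPG] with x hx1 hx2 hx3
    have IntG : Integrable (Gfun P h) (P x) :=
      integrable_of_le _ V₂ K hK0 mG mV₂ hGb _ hx1.ne
    have IntG2 : Integrable (fun y => Gfun P h y ^ 2) (P x) := by
      refine ⟨mG2.aestronglyMeasurable, ?_⟩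
      have hle : ∫⁻ y, ‖Gfun P h y ^ 2‖ₑ ∂P x ≤ ∫⁻ y, ENNReal.ofReal (Gfun P h y ^ 2) ∂P x := by
        refine lintegral_mono fun y => le_of_eq ?_
        rw [Real.enorm_eq_ofReal_abs, abs_of_nonneg (sq_nonneg _)]
      exact lt_of_le_of_lt hle hx2
    set t := ∫ z, Gfun P h z ∂(P x) with htdef
    calc ∫ y, (Gfun P h y - t) ^ 2 ∂(P x)
        = ∫ y, (Gfun P h y ^ 2 - (2 * t) * Gfun P h y + t ^ 2) ∂(P x) := by
          refine integral_congr_ae (ae_of_all _ fun y => ?_); ring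
      _ = (∫ y, (Gfun P h y ^ 2 - (2 * t) * Gfun P h y) ∂(P x)) + t ^ 2 := by
          have hf1 : Integrable (fun y => Gfun P h y ^ 2 - (2 * t) * Gfun P h y) (P x) :=
            IntG2.sub (IntG.const_mul (2 * t))
          rw [integral_add hf1 (integrable_const _), integral_const]
          simp [measure_univ]
      _ = (∫ y, Gfun P h y ^ 2 ∂(P x)) - (2 * t) * t + t ^ 2 := by
          have hf2 : Integrable (fun y => (2 * t) * Gfun P h y) (P x) := IntG.const_mul (2 * t)
          rw [integral_sub IntG2 hf2, integral_const_mul]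
      _ = AA x - (Gfun P h x - h x) ^ 2 := by rw [hGA x, hx3]; ring
  have hRHSval : (∫ x, (AA x - (Gfun P h x - h x) ^ 2) ∂μ)
      = 2 * (∫ x, h x * Gfun P h x ∂μ) - ∫ x, h x ^ 2 ∂μ := by
    rw [integral_sub hIntAA hIntGh2μ, hAAval]
    have hexp : (∫ x, (Gfun P h x - h x) ^ 2 ∂μ)
        = ∫ x, (Gfun P h x ^ 2 - 2 * (h x * Gfun P h x) + h x ^ 2) ∂μ := by
      refine integral_congr_ae (ae_of_all _ fun x => ?_); ring
    have hf1 : Integrable (fun x => Gfun P h x ^ 2 - 2 * (h x * Gfun P h x)) μ :=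
      hIntG2μ.sub (hInthGμ.const_mul 2)
    have hf2 : Integrable (fun x => 2 * (h x * Gfun P h x)) μ := hInthGμ.const_mul 2
    rw [hexp, integral_add hf1 hInth2μ, integral_sub hIntG2μ hf2, integral_const_mul]
    ring
  -- ## the LHS series
  have mhg : ∀ ℓ : ℕ, Measurable fun x => h x * g (ℓ + 1) x := fun ℓ => hm.mul (mg (ℓ + 1))
  have hsummable_shift : ∀ x, Summable fun ℓ => |g (ℓ + 1) x| := fun x =>
    (summable_nat_add_iff 1).mpr (hgabs_summable x)
  have hgshift_le : ∀ x, (∑' ℓ, |g (ℓ + 1) x|) ≤ K * V₂ x := by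
    intro x
    have h3 := Summable.tsum_eq_zero_add (hgabs_summable x)
    have h5 := hgabs_le x
    have h6 := abs_nonneg (g 0 x)
    linarith [h3 ▸ h5]
  have hnn : (∑' ℓ : ℕ, ∫⁻ x, ‖h x * g (ℓ + 1) x‖ₑ ∂μ) ≠ ⊤ := by
    rw [← lintegral_tsum (fun ℓ => (mhg ℓ).enorm.aemeasurable)]
    have hpt : ∀ x, (∑' ℓ, ‖h x * g (ℓ + 1) x‖ₑ)
        ≤ ENNReal.ofReal (M * K) * ENNReal.ofReal (V₂ x ^ 2) := by
      intro x
      have e : (∑' ℓ, ‖h x * g (ℓ + 1) x‖ₑ)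
          = ENNReal.ofReal (∑' ℓ, |h x| * |g (ℓ + 1) x|) := by
        rw [ENNReal.ofReal_tsum_of_nonneg (fun ℓ => mul_nonneg (abs_nonneg _) (abs_nonneg _))
          ((hsummable_shift x).mul_left |h x|)]
        exact tsum_congr fun ℓ => by rw [Real.enorm_eq_ofReal_abs, abs_mul]
      rw [e, ← ENNReal.ofReal_mul (mul_nonneg hM0 hK0)]
      refine ENNReal.ofReal_le_ofReal ?_
      rw [tsum_mul_left]
      calc |h x| * (∑' ℓ, |g (ℓ + 1) x|) ≤ (M * V₂ x) * (K * V₂ x) := by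
              refine mul_le_mul ((hM x).trans (mul_le_mul_of_nonneg_left (h12 x) hM0))
                (hgshift_le x) (tsum_nonneg fun _ => abs_nonneg _) ?_
              exact mul_nonneg hM0 (hV2pos x).le
        _ = M * K * V₂ x ^ 2 := by ring
    have h2 : ∫⁻ x, (∑' ℓ, ‖h x * g (ℓ + 1) x‖ₑ) ∂μ
        ≤ ENNReal.ofReal (M * K) * ∫⁻ x, ENNReal.ofReal (V₂ x ^ 2) ∂μ := by
      rw [← lintegral_const_mul _ (mV₂.pow_const 2).ennreal_ofReal]
      exact lintegral_mono hpt
    exact ne_top_of_le_ne_top (ENNReal.mul_ne_top ENNReal.ofReal_ne_top hmuV22) h2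
  have hSumm : Summable fun ℓ : ℕ => ∫ x, h x * g (ℓ + 1) x ∂μ := by
    apply Summable.of_nnnorm
    rw [← ENNReal.tsum_coe_ne_top_iff_summable]
    exact ne_top_of_le_ne_top hnn
      (ENNReal.tsum_le_tsum fun ℓ => enorm_integral_le_lintegral_enorm _)
  have hsumval : (∑' ℓ : ℕ, ∫ x, h x * g (ℓ + 1) x ∂μ)
      = (∫ x, h x * Gfun P h x ∂μ) - ∫ x, h x ^ 2 ∂μ := by
    rw [← integral_tsum (fun ℓ => (mhg ℓ).aestronglyMeasurable) hnn]
    have hpt : ∀ x, (∑' ℓ, h x * g (ℓ + 1) x) = h x * Gfun P h x - h x ^ 2 := by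
      intro x
      rw [tsum_mul_left]
      have h3 := Summable.tsum_eq_zero_add (hgsummable x)
      have h4 : (∑' ℓ, g (ℓ + 1) x) = Gfun P h x - h x := by
        rw [hGeq x, h3, hg0 x]; ring
      rw [h4]; ring
    calc (∫ x, ∑' ℓ, h x * g (ℓ + 1) x ∂μ)
        = ∫ x, (h x * Gfun P h x - h x ^ 2) ∂μ :=
          integral_congr_ae (ae_of_all _ hpt)
      _ = (∫ x, h x * Gfun P h x ∂μ) - ∫ x, h x ^ 2 ∂μ :=
          integral_sub hInthGμ hInth2μ
  -- ## conclusion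
  constructor
  · exact hSumm
  · show (∫ x, h x ^ 2 ∂μ) + 2 * (∑' ℓ : ℕ, ∫ x, h x * g (ℓ + 1) x ∂μ)
      = ∫ x, ∫ y, (Gfun P h y - ∫ z, Gfun P h z ∂(P x)) ^ 2 ∂(P x) ∂μ
    rw [hsumval, hRHS, hRHSval]
    ring

end
end
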